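/- Let G be a compact Lie group (with a fixed bi-invariant Riemannian structure), let K ⋐ J ⋐ I be nested open intervals with K relatively compact in J and J relatively compact in I, and let s : J → G be of class C¹. Then there exists s̃ : I → G of class C¹ such that: (i) s̃ = s on K; (ii) sup_{t ∈ I} ‖s̃'(t)‖ = sup_{t ∈ K} ‖s'(t)‖; (iii) s̃ is constant on each connected component of I ∖ J. -/

import Mathlib

open Set Filter intervalIntegral


/-- Core one-sided slowdown reparametrization. -/
lemma core_repar (f : ℝ → ℝ) (hf : Continuous f) (hf0 : ∀ x, 0 ≤ f x)
    (M : ℝ) (hM : 0 < M) (c r : ℝ) (hr : 0 < r) (hfc : f c ≤ M) :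
    ∃ R R' : ℝ → ℝ,
      (∀ t, HasDerivAt R (R' t) t) ∧
      Continuous R' ∧
      (∀ t, t ≤ c → R t = t) ∧
      (∀ t, t ≤ c → R' t = 1) ∧
      (∀ t, 0 ≤ R' t) ∧
      (∀ t, c ≤ t → f (R t) * R' t ≤ M) ∧
      (∀ t, R t ≤ c + 3/2 * r) ∧
      (∀ t, min t c ≤ R t) ∧
      (∀ t₁ t₂, c + 3/2 * r ≤ t₁ → c + 3/2 * r ≤ t₂ → R t₁ = R t₂) := by
  -- the ramp-down function p : 1 on (-∞, r/2], 0 on [3r/2, ∞)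
  set p : ℝ → ℝ := fun x => min 1 (max 0 ((3 * r / 2 - x) / r)) with hp_def
  have hp_cont : Continuous p := by fun_prop
  have hp_nonneg : ∀ x, 0 ≤ p x := fun x => le_min one_pos.le (le_max_left _ _)
  have hp_le_one : ∀ x, p x ≤ 1 := fun x => min_le_left _ _
  have hp_one : ∀ x, x ≤ r / 2 → p x = 1 := by
    intro x hx
    have h1 : (1 : ℝ) ≤ (3 * r / 2 - x) / r := by
      rw [le_div_iff₀ hr]; linarith
    simp only [hp_def]
    rw [max_eq_right (le_trans one_pos.le h1), min_eq_left h1]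
  have hp_zero : ∀ x, 3 * r / 2 ≤ x → p x = 0 := by
    intro x hx
    have h1 : (3 * r / 2 - x) / r ≤ 0 := div_nonpos_of_nonpos_of_nonneg (by linarith) hr.le
    simp only [hp_def]
    rw [max_eq_left h1, min_eq_right one_pos.le]
  -- q = primitive of p
  set q : ℝ → ℝ := fun x => ∫ u in (0:ℝ)..x, p u with hq_def
  have hq : ∀ x, HasDerivAt q (p x) x := by
    intro x
    exact integral_hasDerivAt_right (hp_cont.intervalIntegrable _ _)
      (hp_cont.stronglyMeasurableAtFilter _ _) hp_cont.continuousAt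
  have hq_diff : Differentiable ℝ q := fun x => (hq x).differentiableAt
  have hq_mono : Monotone q := by
    apply monotone_of_deriv_nonneg hq_diff
    intro x; rw [(hq x).deriv]; exact hp_nonneg x
  have hq_id : ∀ x, x ≤ r / 2 → q x = x := by
    intro x hx
    have : ∫ u in (0:ℝ)..x, p u = ∫ u in (0:ℝ)..x, (1:ℝ) := by
      apply integral_congr
      intro y hy
      apply hp_one
      rcases le_total 0 x with h | h
      · rw [uIcc_of_le h] at hy; exact le_trans hy.2 hx
      · rw [uIcc_of_ge h] at hy; exact le_trans hy.2 (by linarith)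
    simp only [hq_def]; rw [this, integral_one]; ring
  have hq_const : ∀ x, 3 * r / 2 ≤ x → q x = q (3 * r / 2) := by
    intro x hx
    have hsplit : q (3*r/2) + ∫ u in (3*r/2)..x, p u = q x :=
      integral_add_adjacent_intervals (hp_cont.intervalIntegrable _ _)
        (hp_cont.intervalIntegrable _ _)
    have hzero : ∫ u in (3*r/2)..x, p u = 0 := by
      have : ∫ u in (3*r/2)..x, p u = ∫ u in (3*r/2)..x, (0:ℝ) := by
        apply integral_congr
        intro y hy
        rw [uIcc_of_le hx] at hy
        exact hp_zero y hy.1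
      rw [this, integral_zero]
    rw [← hsplit, hzero, add_zero]
  have hq_ub : ∀ x, q x ≤ 3 / 2 * r := by
    have hq32 : q (3*r/2) ≤ 3/2 * r := by
      have : q (3*r/2) ≤ ∫ u in (0:ℝ)..(3*r/2), (1:ℝ) := by
        apply integral_mono_on (by linarith) (hp_cont.intervalIntegrable _ _)
          (intervalIntegrable_const)
        intro y _; exact hp_le_one y
      rw [integral_one] at this; linarith
    intro x
    rcases le_total x (3*r/2) with h | h
    · exact le_trans (hq_mono h) hq32
    · rw [hq_const x h]; exact hq32
  have hq_nonneg : ∀ x, 0 ≤ x → 0 ≤ q x := by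
    intro x hx
    have h0 : q 0 = 0 := by simp [hq_def]
    rw [← h0]; exact hq_mono hx
  -- the clamp and weight
  set cl : ℝ → ℝ := fun y => max c (min y (c + 2 * r)) with hcl_def
  have hcl_cont : Continuous cl := by fun_prop
  set w : ℝ → ℝ := fun y => max (f (cl y)) M / M with hw_def
  have hw_cont : Continuous w := by fun_prop
  have hw_ge_one : ∀ y, 1 ≤ w y := by
    intro y
    rw [hw_def]
    rw [le_div_iff₀ hM]; simpa using le_max_right (f (cl y)) M
  have hw_pos : ∀ y, 0 < w y := fun y => lt_of_lt_of_le one_pos (hw_ge_one y)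
  have hw_one : ∀ y, y ≤ c → w y = 1 := by
    intro y hy
    have : cl y = c := by
      rw [hcl_def]; simp only
      rw [min_eq_left (by linarith), max_eq_left hy]
    simp only [hw_def, this, max_eq_right hfc, div_self hM.ne']
  -- u = primitive of w
  set u : ℝ → ℝ := fun x => c + ∫ y in c..x, w y with hu_def
  have hu : ∀ x, HasDerivAt u (w x) x := by
    intro x
    exact (integral_hasDerivAt_right (hw_cont.intervalIntegrable _ _)
      (hw_cont.stronglyMeasurableAtFilter _ _) hw_cont.continuousAt).const_add c
  have hu_diff : Differentiable ℝ u := fun x => (hu x).differentiableAt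
  have hu_mono : StrictMono u := by
    apply strictMono_of_deriv_pos
    intro x; rw [(hu x).deriv]; exact hw_pos x
  -- u x ≥ x for x ≥ c, u x ≤ x for x ≤ c
  have husub : Monotone (fun x => u x - x) := by
    have hdiff : Differentiable ℝ (fun x => u x - x) :=
      fun x => ((hu x).sub (hasDerivAt_id x)).differentiableAt
    apply monotone_of_deriv_nonneg hdiff
    intro x
    have hd : HasDerivAt (fun x => u x - x) (w x - 1) x := (hu x).sub (hasDerivAt_id x)
    rw [hd.deriv]; linarith [hw_ge_one x]
  have huc : u c = c := by simp [hu_def]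
  have hu_ge : ∀ x, c ≤ x → x ≤ u x := by
    intro x hx
    have := husub hx
    simp only [huc] at this; linarith
  have hu_le : ∀ x, x ≤ c → u x = x := by
    intro x hx
    have : ∫ y in c..x, w y = ∫ y in c..x, (1:ℝ) := by
      apply integral_congr
      intro y hy
      rw [uIcc_of_ge hx] at hy
      exact hw_one y hy.2
    simp only [hu_def]; rw [this, integral_one]; ring
  have hu_surj : Function.Surjective u := by
    apply hu_diff.continuous.surjective
    · apply tendsto_atTop_mono' _ _ tendsto_id
      filter_upwards [eventually_ge_atTop c] with x hx
      exact hu_ge x hx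
    · apply tendsto_atBot_mono' _ _ tendsto_id
      filter_upwards [eventually_le_atBot c] with x hx
      exact (hu_le x hx).le
  set e : ℝ ≃o ℝ := StrictMono.orderIsoOfSurjective u hu_mono hu_surj with he_def
  set ψ : ℝ → ℝ := fun y => e.symm y with hψ_def
  have heu : ∀ x, e x = u x := fun x => rfl
  have hψu : ∀ x, ψ (u x) = x := by
    intro x; rw [hψ_def]; simp only; rw [← heu]; exact e.symm_apply_apply x
  have huψ : ∀ y, u (ψ y) = y := by
    intro y; rw [← heu]; exact e.apply_symm_apply y
  have hψ_cont : Continuous ψ := e.symm.continuous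
  have hψ_mono : Monotone ψ := e.symm.monotone
  have hψ : ∀ y, HasDerivAt ψ (w (ψ y))⁻¹ y := by
    intro y
    exact HasDerivAt.of_local_left_inverse hψ_cont.continuousAt (hu (ψ y))
      (hw_pos (ψ y)).ne' (Eventually.of_forall huψ)
  have hψ_id : ∀ y, y ≤ c → ψ y = y := by
    intro y hy
    have h := hψu y
    rwa [hu_le y hy] at h
  have hψ_le : ∀ y, c ≤ y → ψ y ≤ y := by
    intro y hy
    have h1 : c ≤ ψ y := by
      have := hψ_mono hy
      rwa [hψ_id c le_rfl] at this
    calc ψ y ≤ u (ψ y) := hu_ge _ h1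
    _ = y := huψ y
  -- definition of R
  refine ⟨fun t => ψ (c + q (t - c)), fun t => (w (ψ (c + q (t - c))))⁻¹ * p (t - c),
    ?_, ?_, ?_, ?_, ?_, ?_, ?_, ?_, ?_⟩
  · -- HasDerivAt
    intro t
    have hθ : HasDerivAt (fun t => c + q (t - c)) (p (t - c)) t := by
      have h1 : HasDerivAt (fun t : ℝ => t - c) 1 t := (hasDerivAt_id t).sub_const c
      have := (hq (t - c)).comp t h1
      simpa using this.const_add c
    exact (hψ (c + q (t - c))).comp t hθ
  · -- continuity of R'
    have hRc : Continuous fun t => ψ (c + q (t - c)) := by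
      apply hψ_cont.comp
      exact (continuous_const.add (hq_diff.continuous.comp (by fun_prop)))
    exact ((hw_cont.comp hRc).inv₀ fun t => (hw_pos _).ne').mul
      (hp_cont.comp (by fun_prop))
  · -- R t = t for t ≤ c
    intro t ht
    show ψ (c + q (t - c)) = t
    rw [hq_id (t - c) (by linarith), show c + (t - c) = t by ring, hψ_id t ht]
  · -- R' t = 1 for t ≤ c
    intro t ht
    have h1 : q (t - c) = t - c := hq_id _ (by linarith)
    have h2 : ψ (c + q (t - c)) = t := by
      rw [h1, show c + (t - c) = t by ring, hψ_id t ht]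
    show (w (ψ (c + q (t - c))))⁻¹ * p (t - c) = 1
    rw [h2, hw_one t ht, hp_one _ (by linarith)]
    norm_num
  · -- 0 ≤ R'
    intro t
    exact mul_nonneg (inv_nonneg.mpr (hw_pos _).le) (hp_nonneg _)
  · -- main bound
    intro t ht
    show f (ψ (c + q (t - c))) * ((w (ψ (c + q (t - c))))⁻¹ * p (t - c)) ≤ M
    set y := ψ (c + q (t - c)) with hy_def
    have hy_lb : c ≤ y := by
      have h := hψ_mono (show c ≤ c + q (t - c) by linarith [hq_nonneg (t - c) (by linarith : (0:ℝ) ≤ t - c)])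
      rwa [hψ_id c le_rfl] at h
    have hy_ub : y ≤ c + 3/2 * r := by
      rw [hy_def]
      calc ψ (c + q (t - c)) ≤ c + q (t - c) := hψ_le _ (by linarith [hq_nonneg (t - c) (by linarith)])
      _ ≤ c + 3/2 * r := by linarith [hq_ub (t - c)]
    have hcl_y : cl y = y := by
      rw [hcl_def]; simp only
      rw [min_eq_left (by linarith), max_eq_right hy_lb]
    have hwy : w y = max (f y) M / M := by rw [hw_def]; simp only [hcl_y]
    have hmax_pos : 0 < max (f y) M := lt_of_lt_of_le hM (le_max_right _ _)
    calc f y * ((w y)⁻¹ * p (t - c))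
        ≤ f y * ((w y)⁻¹ * 1) := by
          apply mul_le_mul_of_nonneg_left _ (hf0 y)
          exact mul_le_mul_of_nonneg_left (hp_le_one _) (inv_nonneg.mpr (hw_pos y).le)
      _ = f y * M / max (f y) M := by rw [hwy]; field_simp
      _ ≤ M := by
          rw [div_le_iff₀ hmax_pos]
          calc f y * M ≤ (f y ⊔ M) * M := mul_le_mul_of_nonneg_right (le_max_left _ _) hM.le
          _ = M * (f y ⊔ M) := mul_comm _ _
  · -- upper bound
    intro t
    show ψ (c + q (t - c)) ≤ c + 3/2 * r
    rcases le_total t c with ht | ht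
    · rw [hq_id _ (by linarith), show c + (t - c) = t by ring, hψ_id t ht]
      linarith
    · calc ψ (c + q (t - c)) ≤ c + q (t - c) :=
        hψ_le _ (by linarith [hq_nonneg (t - c) (by linarith)])
      _ ≤ c + 3/2 * r := by linarith [hq_ub (t - c)]
  · -- lower bound
    intro t
    show min t c ≤ ψ (c + q (t - c))
    rcases le_total t c with ht | ht
    · rw [hq_id _ (by linarith), show c + (t - c) = t by ring, hψ_id t ht, min_eq_left ht]
    · rw [min_eq_right ht]
      have h := hψ_mono (show c ≤ c + q (t - c) by linarith [hq_nonneg (t - c) (by linarith : (0:ℝ) ≤ t - c)])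
      rwa [hψ_id c le_rfl] at h
  · -- constancy
    intro t₁ t₂ h₁ h₂
    show ψ (c + q (t₁ - c)) = ψ (c + q (t₂ - c))
    rw [hq_const (t₁ - c) (by linarith), hq_const (t₂ - c) (by linarith)]


/-- bounded double sup over a set, upper estimate -/
lemma biSup_le_of_le' {S : Set ℝ} {g : ℝ → ℝ} {C : ℝ} (hC : 0 ≤ C)
    (h : ∀ t ∈ S, g t ≤ C) : (⨆ t ∈ S, g t) ≤ C :=
  Real.iSup_le (fun t => Real.iSup_le (fun ht => h t ht) hC) hC

/-- lower estimate for double sup over a set -/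
lemma le_biSup_of' {S : Set ℝ} {g : ℝ → ℝ} {C : ℝ} (hbd : ∀ u ∈ S, g u ≤ C)
    {t : ℝ} (ht : t ∈ S) : g t ≤ ⨆ t ∈ S, g t := by
  have hbdd : BddAbove (range fun t => ⨆ _ : t ∈ S, g t) := by
    refine ⟨max C 0, ?_⟩
    rintro x ⟨u, rfl⟩
    exact Real.iSup_le (fun hu => (hbd u hu).trans (le_max_left _ _)) (le_max_right _ _)
  have h1 : (⨆ _ : t ∈ S, g t) = g t := ciSup_pos ht
  calc g t = ⨆ _ : t ∈ S, g t := h1.symm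
  _ ≤ ⨆ t ∈ S, g t := le_ciSup hbdd t

theorem stmt9 {V : Type*} [NormedAddCommGroup V] [InnerProductSpace ℝ V]
    [FiniteDimensional ℝ V]
    (H : Subgroup (V ≃ₗᵢ[ℝ] V))
    (hHclosed : IsClosed ((fun g : V ≃ₗᵢ[ℝ] V =>
      g.toLinearIsometry.toContinuousLinearMap) '' (H : Set (V ≃ₗᵢ[ℝ] V))))
    (a aJ aK bK bJ b : ℝ)
    (h1 : a < aJ) (h2 : aJ < aK) (h3 : aK < bK) (h4 : bK < bJ) (h5 : bJ < b)
    (s : ℝ → (V →L[ℝ] V))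
    (hs : ContDiffOn ℝ 1 s (Ioo aJ bJ))
    (hmem : ∀ t ∈ Ioo aJ bJ, ∃ g ∈ H, s t = g.toLinearIsometry.toContinuousLinearMap) :
    ∃ stil : ℝ → (V →L[ℝ] V),
      ContDiffOn ℝ 1 stil (Ioo a b) ∧
      (∀ t ∈ Ioo a b, ∃ g ∈ H, stil t = g.toLinearIsometry.toContinuousLinearMap) ∧
      (∀ t ∈ Ioo aK bK, stil t = s t) ∧
      (⨆ t ∈ Ioo a b, ‖derivWithin stil (Ioo a b) t‖) =
        (⨆ t ∈ Ioo aK bK, ‖derivWithin s (Ioo aJ bJ) t‖) ∧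
      (∀ t ∈ Ioc a aJ, stil t = stil aJ) ∧
      (∀ t ∈ Ico bJ b, stil t = stil bJ) := by
  set M : ℝ := ⨆ t ∈ Ioo aK bK, ‖derivWithin s (Ioo aJ bJ) t‖ with hM_def
  have hKJ : Ioo aK bK ⊆ Ioo aJ bJ := Ioo_subset_Ioo h2.le h4.le
  have hKI : Ioo aK bK ⊆ Ioo a b := Ioo_subset_Ioo (by linarith) (by linarith)
  have hIccKJ : Icc aK bK ⊆ Ioo aJ bJ := fun x hx => ⟨lt_of_lt_of_le h2 hx.1, lt_of_le_of_lt hx.2 h4⟩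
  have hdW : ∀ t ∈ Ioo aJ bJ, derivWithin s (Ioo aJ bJ) t = deriv s t :=
    fun t ht => derivWithin_of_isOpen isOpen_Ioo ht
  have hdcont : ContinuousOn (deriv s) (Ioo aJ bJ) :=
    hs.continuousOn_deriv_of_isOpen isOpen_Ioo le_rfl
  have hsdiff : ∀ t ∈ Ioo aJ bJ, DifferentiableAt ℝ s t :=
    fun t ht => (hs.differentiableOn one_ne_zero).differentiableAt (isOpen_Ioo.mem_nhds ht)
  -- a bound on the derivative over K
  obtain ⟨C, hC⟩ : ∃ C, ∀ x ∈ Icc aK bK, ‖deriv s x‖ ≤ C :=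
    isCompact_Icc.exists_bound_of_continuousOn (hdcont.mono hIccKJ)
  have hboundK : ∀ t ∈ Ioo aK bK, ‖derivWithin s (Ioo aJ bJ) t‖ ≤ C := by
    intro t ht
    rw [hdW t (hKJ ht)]
    exact hC t ⟨ht.1.le, ht.2.le⟩
  have hM_nonneg : 0 ≤ M :=
    Real.iSup_nonneg fun t => Real.iSup_nonneg fun _ => norm_nonneg _
  -- ‖deriv s‖ ≤ M on all of Icc aK bK
  have hnorm_le_M : ∀ x ∈ Icc aK bK, ‖deriv s x‖ ≤ M := by
    have hIoo : ∀ x ∈ Ioo aK bK, ‖deriv s x‖ ≤ M := by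
      intro x hx
      have := le_biSup_of' hboundK hx
      rwa [hdW x (hKJ hx)] at this
    have hcl : closure (Ioo aK bK) = Icc aK bK := closure_Ioo h3.ne
    intro x hx
    have hxcl : x ∈ closure (Ioo aK bK) := by rw [hcl]; exact hx
    refine le_on_closure (f := fun x => ‖deriv s x‖) (g := fun _ => M) hIoo ?_ ?_ hxcl
    · rw [hcl]; exact (hdcont.mono hIccKJ).norm
    · exact continuousOn_const
  rcases hM_nonneg.lt_or_eq with hM | hM0
  · -- main case M > 0
    -- globally-defined continuous version of ‖deriv s‖
    set aJ' : ℝ := (aJ + aK) / 2 with haJ'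
    set bJ' : ℝ := (bK + bJ) / 2 with hbJ'
    set F : ℝ → ℝ := fun x => ‖deriv s (max aJ' (min x bJ'))‖ with hF_def
    have hclamp_mem : ∀ x : ℝ, max aJ' (min x bJ') ∈ Ioo aJ bJ := by
      intro x
      constructor
      · have : aJ' ≤ max aJ' (min x bJ') := le_max_left _ _
        have h : aJ < aJ' := by rw [haJ']; linarith
        linarith
      · have h1 : max aJ' (min x bJ') ≤ max aJ' bJ' :=
          max_le_max le_rfl (min_le_right _ _)
        have h2 : aJ' ≤ bJ' := by rw [haJ', hbJ']; linarith
        have h3' : max aJ' bJ' = bJ' := max_eq_right h2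
        have : bJ' < bJ := by rw [hbJ']; linarith
        linarith [h1, h3'.le]
    have hF_cont : Continuous F := by
      have h1 : ContinuousOn (fun x => ‖deriv s x‖) (Ioo aJ bJ) := hdcont.norm
      exact h1.comp_continuous (by fun_prop) hclamp_mem
    have hF_eq : ∀ x, aJ' ≤ x → x ≤ bJ' → F x = ‖deriv s x‖ := by
      intro x hx1 hx2
      rw [hF_def]
      simp only
      rw [min_eq_left hx2, max_eq_right hx1]
    have hF0 : ∀ x, 0 ≤ F x := fun x => norm_nonneg _
    have hsubIcc : ∀ x, aK ≤ x → x ≤ bK → (aJ' ≤ x ∧ x ≤ bJ') := by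
      intro x hx1 hx2
      constructor
      · rw [haJ']; linarith
      · rw [hbJ']; linarith
    have hFK : ∀ x, aK ≤ x → x ≤ bK → F x ≤ M := by
      intro x hx1 hx2
      obtain ⟨hh1, hh2⟩ := hsubIcc x hx1 hx2
      rw [hF_eq x hh1 hh2]
      exact hnorm_le_M x ⟨hx1, hx2⟩
    set rR : ℝ := (bJ - bK) / 4 with hrR
    set r₀ : ℝ := (aK - aJ) / 4 with hr₀
    have hrR_pos : 0 < rR := by rw [hrR]; linarith
    have hr₀_pos : 0 < r₀ := by rw [hr₀]; linarith
    obtain ⟨R, R', hR, hR'c, hRid, hR'1, hR'0, hRbd, hRub, hRlb, hRconst⟩ :=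
      core_repar F hF_cont hF0 M hM bK rR hrR_pos (hFK bK h3.le le_rfl)
    obtain ⟨R₀, R₀', hR₀, hR₀'c, hR₀id, hR₀'1, hR₀'0, hR₀bd, hR₀ub, hR₀lb, hR₀const⟩ :=
      core_repar (fun y => F (2 * aK - y)) (hF_cont.comp (by fun_prop))
        (fun y => hF0 _) M hM aK r₀ hr₀_pos
        (by show F (2 * aK - aK) ≤ M
            rw [show 2 * aK - aK = aK by ring]
            exact hFK aK le_rfl h3.le)
    set L : ℝ → ℝ := fun t => 2 * aK - R₀ (2 * aK - t) with hL_def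
    set L' : ℝ → ℝ := fun t => R₀' (2 * aK - t) with hL'_def
    have hL : ∀ t, HasDerivAt L (L' t) t := by
      intro t
      have ha : HasDerivAt (fun t : ℝ => 2 * aK - t) (-1) t := by
        simpa using (hasDerivAt_id t).const_sub (2 * aK)
      have hb : HasDerivAt (fun t => R₀ (2 * aK - t)) (R₀' (2 * aK - t) * (-1)) t :=
        (hR₀ (2 * aK - t)).comp t ha
      have hc := hb.const_sub (2 * aK)
      have : -(R₀' (2 * aK - t) * (-1)) = L' t := by rw [hL'_def]; ring
      rw [← this]
      exact hc
    have hL_cont : Continuous L := by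
      have : Differentiable ℝ L := fun t => (hL t).differentiableAt
      exact this.continuous
    have hLid : ∀ t, aK ≤ t → L t = t := by
      intro t ht
      rw [hL_def]
      simp only
      rw [hR₀id (2 * aK - t) (by linarith)]
      ring
    have hL'1 : ∀ t, aK ≤ t → L' t = 1 := fun t ht => hR₀'1 (2 * aK - t) (by linarith)
    have hL'0 : ∀ t, 0 ≤ L' t := fun t => hR₀'0 (2 * aK - t)
    have hLle : ∀ t, t ≤ aK → L t ≤ aK := by
      intro t ht
      have h := hR₀lb (2 * aK - t)
      rw [min_eq_right (by linarith : aK ≤ 2 * aK - t)] at h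
      rw [hL_def]; simp only; linarith
    have hLge : ∀ t, aK - 3 / 2 * r₀ ≤ L t := by
      intro t
      have h := hR₀ub (2 * aK - t)
      rw [hL_def]; simp only; linarith
    have hLbd : ∀ t, t ≤ aK → F (L t) * L' t ≤ M := by
      intro t ht
      have h := hR₀bd (2 * aK - t) (by linarith)
      exact h
    have hLconst : ∀ t₁ t₂, t₁ ≤ aK - 3 / 2 * r₀ → t₂ ≤ aK - 3 / 2 * r₀ → L t₁ = L t₂ := by
      intro t₁ t₂ ht₁ ht₂
      rw [hL_def]; simp only
      rw [hR₀const (2 * aK - t₁) (2 * aK - t₂) (by linarith) (by linarith)]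
    -- the reparametrization
    set Φ : ℝ → ℝ := fun t => R (L t) with hΦ_def
    set Φ' : ℝ → ℝ := fun t => R' (L t) * L' t with hΦ'_def
    have hΦ : ∀ t, HasDerivAt Φ (Φ' t) t := fun t => (hR (L t)).comp t (hL t)
    have hΦ'_0 : ∀ t, 0 ≤ Φ' t := fun t => mul_nonneg (hR'0 (L t)) (hL'0 t)
    have hΦ_lb : ∀ t, aK - 3 / 2 * r₀ ≤ Φ t := by
      intro t
      have h := hRlb (L t)
      have h2 := hLge t
      have : min (L t) bK ≥ aK - 3 / 2 * r₀ := le_min h2 (by linarith [hr₀_pos])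
      rw [hΦ_def]; simp only; linarith
    have hΦ_ub : ∀ t, Φ t ≤ bK + 3 / 2 * rR := fun t => hRub (L t)
    have hΦ_memJ : ∀ t, Φ t ∈ Ioo aJ bJ := by
      intro t
      constructor
      · have h := hΦ_lb t
        rw [hr₀] at h
        linarith
      · have h := hΦ_ub t
        rw [hrR] at h
        linarith
    have hΦ_clamp : ∀ t, aJ' ≤ Φ t ∧ Φ t ≤ bJ' := by
      intro t
      constructor
      · have h := hΦ_lb t
        rw [hr₀] at h
        rw [haJ']
        linarith
      · have h := hΦ_ub t
        rw [hrR] at h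
        rw [hbJ']
        linarith
    have hΦ_id : ∀ t, aK ≤ t → t ≤ bK → Φ t = t := by
      intro t ht1 ht2
      rw [hΦ_def]; simp only
      rw [hLid t ht1, hRid t ht2]
    have hΦ'_id : ∀ t, aK ≤ t → t ≤ bK → Φ' t = 1 := by
      intro t ht1 ht2
      rw [hΦ'_def]; simp only
      rw [hLid t ht1, hR'1 t ht2, hL'1 t ht1]
      norm_num
    have hFΦ : ∀ t, F (Φ t) = ‖deriv s (Φ t)‖ :=
      fun t => hF_eq (Φ t) (hΦ_clamp t).1 (hΦ_clamp t).2
    have hKey : ∀ t, F (Φ t) * Φ' t ≤ M := by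
      intro t
      rcases le_total t aK with ht | ht
      · have hLt : L t ≤ aK := hLle t ht
        have hRL : R (L t) = L t := hRid (L t) (by linarith)
        have hR'L : R' (L t) = 1 := hR'1 (L t) (by linarith)
        rw [hΦ_def, hΦ'_def]; simp only
        rw [hRL, hR'L, one_mul]
        exact hLbd t ht
      · rcases le_total t bK with ht2 | ht2
        · rw [hΦ_id t ht ht2, hΦ'_id t ht ht2, mul_one]
          exact hFK t ht ht2
        · have hLt : L t = t := hLid t (by linarith)
          have hL't : L' t = 1 := hL'1 t (by linarith)
          rw [hΦ_def, hΦ'_def]; simp only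
          rw [hLt, hL't, mul_one]
          exact hRbd t ht2
    have hΦ_cd : ContDiff ℝ 1 Φ := by
      rw [contDiff_one_iff_deriv]
      refine ⟨fun t => (hΦ t).differentiableAt, ?_⟩
      have hde : deriv Φ = Φ' := funext fun t => (hΦ t).deriv
      rw [hde, hΦ'_def]
      have hL'c : Continuous L' := by
        rw [hL'_def]; exact hR₀'c.comp (by fun_prop)
      exact ((hR'c.comp hL_cont)).mul hL'c
    -- the extension
    refine ⟨fun t => s (Φ t), ?_, ?_, ?_, ?_, ?_, ?_⟩
    · exact ContDiffOn.comp hs (hΦ_cd.contDiffOn) (fun t _ => hΦ_memJ t)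
    · exact fun t _ => hmem (Φ t) (hΦ_memJ t)
    · intro t ht
      show s (Φ t) = s t
      rw [hΦ_id t ht.1.le ht.2.le]
    · -- the sup identity
      have hds : ∀ t, HasDerivAt (fun t => s (Φ t)) (Φ' t • deriv s (Φ t)) t := by
        intro t
        exact HasDerivAt.scomp t ((hsdiff (Φ t) (hΦ_memJ t)).hasDerivAt) (hΦ t)
      have hnorm : ∀ t, ‖deriv (fun t => s (Φ t)) t‖ ≤ M := by
        intro t
        rw [(hds t).deriv]
        have hsn : ‖Φ' t • deriv s (Φ t)‖ = Φ' t * ‖deriv s (Φ t)‖ := by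
          rw [norm_smul (Φ' t) (deriv s (Φ t)), Real.norm_eq_abs, abs_of_nonneg (hΦ'_0 t)]
        rw [hsn]
        calc Φ' t * ‖deriv s (Φ t)‖ = F (Φ t) * Φ' t := by rw [hFΦ]; ring
        _ ≤ M := hKey t
      have hbd2 : ∀ t ∈ Ioo a b, ‖derivWithin (fun t => s (Φ t)) (Ioo a b) t‖ ≤ M := by
        intro t ht
        rw [derivWithin_of_isOpen isOpen_Ioo ht]
        exact hnorm t
      apply le_antisymm
      · exact biSup_le_of_le' hM.le hbd2
      · apply biSup_le_of_le'
          (Real.iSup_nonneg fun t => Real.iSup_nonneg fun _ => norm_nonneg _)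
        intro t ht
        have heq : ‖derivWithin s (Ioo aJ bJ) t‖ =
            ‖derivWithin (fun t => s (Φ t)) (Ioo a b) t‖ := by
          rw [hdW t (hKJ ht), derivWithin_of_isOpen isOpen_Ioo (hKI ht), (hds t).deriv,
            hΦ'_id t ht.1.le ht.2.le, hΦ_id t ht.1.le ht.2.le, one_smul]
        rw [heq]
        exact le_biSup_of' hbd2 (hKI ht)
    · intro t ht
      have h : L t = L aJ := by
        apply hLconst
        · rw [hr₀]; linarith [ht.2]
        · rw [hr₀]; linarith
      show s (Φ t) = s (Φ aJ)
      rw [hΦ_def]; simp only; rw [h]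
    · intro t ht
      have hL1 : L t = t := hLid t (by linarith [ht.1])
      have hLbJ : L bJ = bJ := hLid bJ (by linarith)
      have h : R t = R bJ := by
        apply hRconst <;> · rw [hrR]; linarith [ht.1]
      show s (Φ t) = s (Φ bJ)
      rw [hΦ_def]; simp only; rw [hL1, hLbJ, h]
  · -- degenerate case M = 0 : s is constant on K
    have hz : ∀ t ∈ Ioo aK bK, deriv s t = 0 := by
      intro t ht
      have h := le_biSup_of' hboundK ht
      rw [← hM_def] at h
      have h2 : ‖derivWithin s (Ioo aJ bJ) t‖ ≤ 0 := by rw [hM0]; exact h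
      have h3 : derivWithin s (Ioo aJ bJ) t = 0 := norm_le_zero_iff.mp h2
      rwa [hdW t (hKJ ht)] at h3
    set m : ℝ := (aK + bK) / 2 with hm_def
    have hmK : m ∈ Ioo aK bK := ⟨by rw [hm_def]; linarith, by rw [hm_def]; linarith⟩
    have hconst : ∀ t ∈ Ioo aK bK, s t = s m := by
      intro t ht
      apply Convex.is_const_of_fderivWithin_eq_zero (𝕜 := ℝ) (convex_Ioo aK bK)
        ((hs.differentiableOn one_ne_zero).mono hKJ) _ ht hmK
      intro x hx
      rw [fderivWithin_of_isOpen isOpen_Ioo hx]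
      have hd : HasDerivAt s 0 x := by
        have := (hsdiff x (hKJ hx)).hasDerivAt
        rwa [hz x hx] at this
      have := hd.hasFDerivAt
      have h0 : (1 : ℝ →L[ℝ] ℝ).smulRight (0 : V →L[ℝ] V) = 0 := by
        ext v; simp
      rw [← h0]
      exact this.fderiv
    refine ⟨fun _ => s m, contDiffOn_const, fun t _ => hmem m (hKJ hmK), ?_, ?_, ?_, ?_⟩
    · exact fun t ht => (hconst t ht).symm
    · rw [← hM0]
      apply le_antisymm
      · apply biSup_le_of_le' le_rfl
        intro t ht
        rw [show derivWithin (fun _ => s m) (Ioo a b) t = 0 from congrFun (derivWithin_const (Ioo a b) (s m)) t]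
        simp
      · exact Real.iSup_nonneg fun t => Real.iSup_nonneg fun _ => norm_nonneg _
    · intro t _; rfl
    · intro t _; rfl
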